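/- Let n ≥ 1 and let p ∈ ℂ[x₁,…,xₙ] be a nonconstant polynomial whose zero set V(p) is allowable. Then p is homogeneous. -/

import Mathlib

open MvPolynomial

/-- The substitution `xᵢ ↦ t·xᵢ`, as an algebra map into polynomials in `t`
over the multivariate polynomial ring. -/
noncomputable def PhiScale {σ : Type*} :
    MvPolynomial σ ℂ →ₐ[ℂ] Polynomial (MvPolynomial σ ℂ) :=
  aeval fun i => Polynomial.C (X i) * Polynomial.X

lemma coeff_PhiScale {σ : Type*} (q : MvPolynomial σ ℂ) (d : ℕ) :
    (PhiScale q).coeff d = homogeneousComponent d q := by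
  induction q using MvPolynomial.induction_on' with
  | add p q hp hq => simp [map_add, hp, hq]
  | monomial u a =>
      have h1 : PhiScale (monomial u a) =
          Polynomial.C (monomial u a) * Polynomial.X ^ (u.degree) := by
        rw [PhiScale, aeval_monomial, monomial_eq]
        rw [Finsupp.prod, Finsupp.prod]
        have : ∀ i ∈ u.support,
            (Polynomial.C (X i) * Polynomial.X) ^ u i
              = Polynomial.C ((X i : MvPolynomial σ ℂ) ^ u i) * Polynomial.X ^ u i := by
          intro i _; rw [mul_pow, Polynomial.C_pow]
        rw [Finset.prod_congr rfl this, Finset.prod_mul_distrib, ← map_prod,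
          Finset.prod_pow_eq_pow_sum]
        have : (algebraMap ℂ (Polynomial (MvPolynomial σ ℂ))) a = Polynomial.C (C a) := rfl
        rw [this, ← mul_assoc, ← Polynomial.C_mul, Finsupp.degree]
        rfl
      have h2 : homogeneousComponent d (monomial u a)
          = if d = u.degree then monomial u a else 0 := by
        have hm : (monomial u a).IsHomogeneous u.degree := isHomogeneous_monomial a rfl
        exact homogeneousComponent_of_mem ((mem_homogeneousSubmodule _ _).2 hm)
      rw [h1, h2, Polynomial.coeff_C_mul, Polynomial.coeff_X_pow]
      split_ifs <;> simp

lemma PhiScale_eq_zero {σ : Type*} {q : MvPolynomial σ ℂ} (h : PhiScale q = 0) : q = 0 := by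
  rw [← MvPolynomial.sum_homogeneousComponent q]
  refine Finset.sum_eq_zero fun i _ => ?_
  rw [← coeff_PhiScale, h, Polynomial.coeff_zero]

lemma isHomogeneous_of_components {σ : Type*} (q : MvPolynomial σ ℂ) (a : ℕ)
    (h : ∀ d, d ≠ a → homogeneousComponent d q = 0) : q.IsHomogeneous a := by
  rw [← MvPolynomial.sum_homogeneousComponent q]
  refine MvPolynomial.IsHomogeneous.sum _ _ _ fun i _ => ?_
  by_cases hia : i = a
  · subst hia; exact homogeneousComponent_isHomogeneous i q
  · rw [h i hia]; exact isHomogeneous_zero _ _ _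

/-- A divisor of a nonzero homogeneous polynomial is homogeneous. -/
lemma isHomogeneous_of_dvd {σ : Type*} {p h : MvPolynomial σ ℂ} {e : ℕ}
    (hh : h ≠ 0) (hhom : h.IsHomogeneous e) (hd : p ∣ h) : ∃ a, p.IsHomogeneous a := by
  obtain ⟨q, rfl⟩ := hd
  have hp0 : p ≠ 0 := left_ne_zero_of_mul hh
  have hq0 : q ≠ 0 := right_ne_zero_of_mul hh
  have hΦp0 : PhiScale p ≠ 0 := fun h0 => hp0 (PhiScale_eq_zero h0)
  have hΦq0 : PhiScale q ≠ 0 := fun h0 => hq0 (PhiScale_eq_zero h0)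
  have hΦh : PhiScale (p * q) = Polynomial.C (p * q) * Polynomial.X ^ e := by
    apply Polynomial.ext; intro d
    rw [coeff_PhiScale, Polynomial.coeff_C_mul, Polynomial.coeff_X_pow,
      homogeneousComponent_of_mem ((mem_homogeneousSubmodule _ _).2 hhom)]
    split_ifs <;> simp
  have hmul : PhiScale p * PhiScale q = Polynomial.C (p * q) * Polynomial.X ^ e := by
    rw [← map_mul]; exact hΦh
  have hC0 : (Polynomial.C (p * q) : Polynomial (MvPolynomial σ ℂ)) ≠ 0 := by
    simpa using hh
  have hdeg : (PhiScale p).natDegree + (PhiScale q).natDegree = e := by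
    rw [← Polynomial.natDegree_mul hΦp0 hΦq0, hmul,
      Polynomial.natDegree_C_mul_X_pow _ _ hh]
  have htr : (PhiScale p).natTrailingDegree + (PhiScale q).natTrailingDegree = e := by
    rw [← Polynomial.natTrailingDegree_mul hΦp0 hΦq0, hmul,
      Polynomial.natTrailingDegree_mul hC0 (pow_ne_zero _ Polynomial.X_ne_zero),
      Polynomial.natTrailingDegree_C, Polynomial.natTrailingDegree_X_pow, zero_add]
  have h1 := Polynomial.natTrailingDegree_le_natDegree (PhiScale p)
  have h2 := Polynomial.natTrailingDegree_le_natDegree (PhiScale q)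
  have heq : (PhiScale p).natTrailingDegree = (PhiScale p).natDegree := by omega
  refine ⟨(PhiScale p).natDegree, isHomogeneous_of_components p _ fun d hd => ?_⟩
  rw [← coeff_PhiScale]
  rcases lt_or_gt_of_ne hd with hlt | hgt
  · exact Polynomial.coeff_eq_zero_of_lt_natTrailingDegree (heq ▸ hlt)
  · exact Polynomial.coeff_eq_zero_of_natDegree_lt hgt

/-- An allowable hyperplane in `ℂⁿ`: one of `{x_i = 0}`, `{x_i + x_j = 0}`, `{x_i - x_j = 0}`. -/
def IsAllowableHyperplane (n : ℕ) (H : Set (Fin n → ℂ)) : Prop :=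
  (∃ i : Fin n, H = {x | x i = 0}) ∨
  (∃ i j : Fin n, i ≠ j ∧ H = {x | x i + x j = 0}) ∨
  (∃ i j : Fin n, i ≠ j ∧ H = {x | x i - x j = 0})

/-- An allowable set: a finite union of finite intersections of allowable hyperplanes. -/
def IsAllowable (n : ℕ) (A : Set (Fin n → ℂ)) : Prop :=
  ∃ (k : ℕ) (m : Fin k → ℕ) (H : (i : Fin k) → Fin (m i) → Set (Fin n → ℂ)),
    (∀ i j, IsAllowableHyperplane n (H i j)) ∧ A = ⋃ i, ⋂ j, H i j

lemma allowable_poly {n : ℕ} {H : Set (Fin n → ℂ)} (h : IsAllowableHyperplane n H) :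
    ∃ L : MvPolynomial (Fin n) ℂ, L.IsHomogeneous 1 ∧ L ≠ 0 ∧
      ∀ x, x ∈ H ↔ MvPolynomial.eval x L = 0 := by
  rcases h with ⟨i, rfl⟩ | ⟨i, j, hij, rfl⟩ | ⟨i, j, hij, rfl⟩
  · exact ⟨X i, isHomogeneous_X _ _, MvPolynomial.X_ne_zero i, fun x => by simp⟩
  · refine ⟨X i + X j, (isHomogeneous_X _ _).add (isHomogeneous_X _ _), ?_, fun x => by simp⟩
    intro h0
    have := congrArg (MvPolynomial.eval (fun _ => (1 : ℂ))) h0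
    norm_num at this
  · refine ⟨X i - X j, (isHomogeneous_X _ _).sub (isHomogeneous_X _ _), ?_, fun x => by simp⟩
    intro h0
    have := congrArg (MvPolynomial.eval (Pi.single i (1 : ℂ))) h0
    simp [Pi.single_eq_of_ne hij.symm] at this

/-- A nonconstant complex polynomial with allowable variety is homogeneous. -/
theorem stmt_5 (n : ℕ) (hn : 1 ≤ n) (p : MvPolynomial (Fin n) ℂ)
    (hp : 0 < p.totalDegree)
    (hV : IsAllowable n {x | MvPolynomial.eval x p = 0}) :
    ∃ d : ℕ, p.IsHomogeneous d := by
  obtain ⟨k, m, H, hH, hA⟩ := hV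
  have hp0 : p ≠ 0 := fun h => by simp [h] at hp
  by_cases hm : ∀ i, 0 < m i
  · choose L hL1 hL0 hLmem using fun i : Fin k => allowable_poly (hH i ⟨0, hm i⟩)
    set g := ∏ i : Fin k, L i with hgdef
    have hg : g.IsHomogeneous k := by
      have := MvPolynomial.IsHomogeneous.prod Finset.univ L (fun _ => 1)
        (fun i _ => hL1 i)
      simpa using this
    have hg0 : g ≠ 0 := Finset.prod_ne_zero_iff.mpr fun i _ => hL0 i
    have hsub : ∀ x : Fin n → ℂ, MvPolynomial.eval x p = 0 → MvPolynomial.eval x g = 0 := by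
      intro x hx
      have hxA : x ∈ ⋃ i, ⋂ j, H i j := by
        rw [← hA]; exact hx
      obtain ⟨i, hi⟩ := Set.mem_iUnion.1 hxA
      have hxi : x ∈ H i ⟨0, hm i⟩ := Set.mem_iInter.1 hi _
      have hz := (hLmem i x).1 hxi
      rw [hgdef, map_prod]
      exact Finset.prod_eq_zero (Finset.mem_univ i) hz
    have hgv : g ∈ MvPolynomial.vanishingIdeal ℂ (MvPolynomial.zeroLocus ℂ (Ideal.span {p})) := by
      rw [MvPolynomial.mem_vanishingIdeal_iff]
      intro x hx
      rw [MvPolynomial.zeroLocus_span] at hx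
      exact hsub x (hx p rfl)
    rw [MvPolynomial.vanishingIdeal_zeroLocus_eq_radical] at hgv
    obtain ⟨N, hN⟩ := hgv
    have hdvd : p ∣ g ^ N := (Ideal.mem_span_singleton).1 hN
    exact isHomogeneous_of_dvd (pow_ne_zero _ hg0) (hg.pow N) hdvd
  · exfalso
    push_neg at hm
    obtain ⟨i, hi⟩ := hm
    have hi0 : m i = 0 := by omega
    have hall : ∀ x : Fin n → ℂ, MvPolynomial.eval x p = 0 := by
      intro x
      have : x ∈ ⋃ i, ⋂ j, H i j := by
        refine Set.mem_iUnion.2 ⟨i, Set.mem_iInter.2 fun j => ?_⟩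
        exact absurd j.isLt (by omega)
      rw [← hA] at this
      exact this
    have : p = 0 := MvPolynomial.funext fun x => by rw [hall x, map_zero]
    simp [this] at hp
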